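/- Let A be a bounded normal operator on a complex Hilbert space H and let L ⊆ H be a finite-dimensional subspace with orthogonal projection P onto L. Then σ(S_L) = Spec₂(A, L). -/

import Mathlib

open scoped InnerProductSpace ComplexConjugate Classical
open Complex ContinuousLinearMap

noncomputable section

variable {H : Type*} [NormedAddCommGroup H] [InnerProductSpace ℂ H] [CompleteSpace H]

/-- Orthogonal projection onto a subspace, as a map into the subspace (junk value `0` if the
subspace admits no orthogonal projection). -/
def projCLM (L : Submodule ℂ H) : H →L[ℂ] ↥L :=
  if h : Submodule.HasOrthogonalProjection L then (letI := h; Submodule.orthogonalProjectionOnto L) else 0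

/-- Compression `P B|_L : L → L` of an operator to a subspace. -/
def compress (B : H →L[ℂ] H) (L : Submodule ℂ H) : ↥L →L[ℂ] ↥L :=
  projCLM L ∘L B ∘L L.subtypeL

/-- Block operator matrix `[[B11, B12],[B21, B22]]` on `E × E`. -/
def block2 {E : Type*} [NormedAddCommGroup E] [NormedSpace ℂ E]
    (B11 B12 B21 B22 : E →L[ℂ] E) : (E × E) →L[ℂ] (E × E) :=
  ((B11 ∘L ContinuousLinearMap.fst ℂ E E) + (B12 ∘L ContinuousLinearMap.snd ℂ E E)).prod
  ((B21 ∘L ContinuousLinearMap.fst ℂ E E) + (B22 ∘L ContinuousLinearMap.snd ℂ E E))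

/-- `S_L = [[P(A + A*)|_L, −P A*A|_L],[I, 0]]` on `L × L`. -/
def SL (A : H →L[ℂ] H) (L : Submodule ℂ H) : (↥L × ↥L) →L[ℂ] (↥L × ↥L) :=
  block2 (compress (A + ContinuousLinearMap.adjoint A) L)
    (-(compress (ContinuousLinearMap.adjoint A * A) L)) 1 0

/-- The second order spectrum of `A` relative to `L`. -/
def Spec2 (A : H →L[ℂ] H) (L : Submodule ℂ H) : Set ℂ :=
  {z | ∃ φ ∈ L, φ ≠ 0 ∧ ∀ ψ ∈ L, ⟪(A - z • 1) φ, (A - (conj z) • 1) ψ⟫_ℂ = 0}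

lemma isUnit_iff_injective' {E : Type*} [NormedAddCommGroup E] [NormedSpace ℂ E]
    [FiniteDimensional ℂ E] (T : E →L[ℂ] E) :
    IsUnit T ↔ Function.Injective T := by
  constructor
  · rintro ⟨u, rfl⟩
    refine Function.LeftInverse.injective (g := ((↑u⁻¹ : E →L[ℂ] E))) fun x => ?_
    rw [← ContinuousLinearMap.mul_apply, u.inv_mul, ContinuousLinearMap.one_apply]
  · intro hinj
    have hsurj : Function.Surjective T.toLinearMap :=
      LinearMap.injective_iff_surjective.mp hinj
    let e := LinearEquiv.ofBijective T.toLinearMap ⟨hinj, hsurj⟩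
    let e' := e.toContinuousLinearEquiv
    refine ⟨e'.toUnit, ?_⟩
    ext x
    simp [e', ContinuousLinearEquiv.toUnit, LinearEquiv.coe_toContinuousLinearEquiv', e]
    rfl

lemma mem_spectrum_iff_eigen {E : Type*} [NormedAddCommGroup E] [NormedSpace ℂ E]
    [FiniteDimensional ℂ E] (T : E →L[ℂ] E) (z : ℂ) :
    z ∈ spectrum ℂ T ↔ ∃ v, v ≠ 0 ∧ T v = z • v := by
  rw [spectrum.mem_iff, isUnit_iff_injective', injective_iff_map_eq_zero, not_forall]
  constructor
  · rintro ⟨v, hv⟩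
    rw [_root_.not_imp] at hv
    refine ⟨v, hv.2, ?_⟩
    have h := hv.1
    simp only [ContinuousLinearMap.sub_apply, Algebra.algebraMap_eq_smul_one,
      ContinuousLinearMap.smul_apply, ContinuousLinearMap.one_apply, sub_eq_zero] at h
    exact h.symm
  · rintro ⟨v, hvne, hv⟩
    refine ⟨v, ?_⟩
    rw [_root_.not_imp]
    exact ⟨by simp [Algebra.algebraMap_eq_smul_one, sub_eq_zero, hv], hvne⟩

lemma key_lemma (A : H →L[ℂ] H) (L : Submodule ℂ H) [FiniteDimensional ℂ ↥L] (z : ℂ) (y : ↥L) :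
    ((compress (A + adjoint A) L) (z • y) + (-(compress (adjoint A * A) L)) y = z • z • y)
      ↔ ∀ ψ ∈ L, ⟪(A - z • 1) ↑y, (A - (conj z) • 1) ψ⟫_ℂ = 0 := by
  have hP : projCLM L = (Submodule.orthogonalProjectionOnto L : H →L[ℂ] ↥L) :=
    dif_pos (Submodule.HasOrthogonalProjection.ofCompleteSpace (K := L))
  set w : H := z • ((A + adjoint A) (↑y : H)) - (adjoint A * A) (↑y : H) - (z*z) • (↑y : H) with hw
  have hPw : Submodule.orthogonalProjectionOnto L w
      = (compress (A + adjoint A) L) (z • y) + (-(compress (adjoint A * A) L)) y - z • z • y := by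
    rw [hw, map_sub, map_sub, map_smul]
    have h3 : (Submodule.orthogonalProjectionOnto L) ((z*z) • (↑y : H)) = z • z • y := by
      rw [← Submodule.coe_smul, Submodule.orthogonalProjectionOnto_mem_subspace_eq_self, smul_smul]
    rw [h3]
    simp only [compress, hP, ContinuousLinearMap.comp_apply, Submodule.subtypeL_apply,
      Submodule.coe_smul, map_smul, ContinuousLinearMap.neg_apply]
    abel
  have hadj : adjoint (A - (conj z : ℂ) • (1 : H →L[ℂ] H)) = adjoint A - z • 1 := by
    rw [← ContinuousLinearMap.star_eq_adjoint, star_sub, star_smul, star_one,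
      ContinuousLinearMap.star_eq_adjoint]
    simp
  have hvec : ∀ ψ : H, ⟪(A - z • 1) (↑y : H), (A - (conj z) • 1) ψ⟫_ℂ = -⟪w, ψ⟫_ℂ := by
    intro ψ
    rw [← ContinuousLinearMap.adjoint_inner_left (A - (conj z : ℂ) • 1), hadj]
    rw [← inner_neg_left]
    congr 1
    rw [hw]
    simp only [ContinuousLinearMap.sub_apply, ContinuousLinearMap.smul_apply,
      ContinuousLinearMap.one_apply, map_sub, map_smul, ContinuousLinearMap.mul_apply,
      ContinuousLinearMap.add_apply]
    module
  constructor
  · intro h ψ hψ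
    have h0 : Submodule.orthogonalProjectionOnto L w = 0 := by rw [hPw, h]; abel
    have hmem : w ∈ Lᗮ := Submodule.orthogonalProjectionOnto_eq_zero_iff.mp h0
    rw [hvec ψ, (L.mem_orthogonal' w).mp hmem ψ hψ, neg_zero]
  · intro h
    have hmem : w ∈ Lᗮ := (L.mem_orthogonal' w).mpr fun ψ hψ => by
      have := h ψ hψ
      rw [hvec ψ] at this
      simpa [neg_eq_zero] using this
    have h0 := Submodule.orthogonalProjectionOnto_eq_zero_iff.mpr hmem
    rw [hPw, sub_eq_zero] at h0
    exact h0

lemma SL_apply (A : H →L[ℂ] H) (L : Submodule ℂ H) (v : ↥L × ↥L) :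
    SL A L v = ((compress (A + adjoint A) L) v.1 + (-(compress (adjoint A * A) L)) v.2, v.1) := by
  simp [SL, block2, ContinuousLinearMap.prod_apply]

/-- Lemma 3.2: `σ(S_L) = Spec₂(A, L)` for a finite-dimensional subspace `L`. -/
theorem stmt9 (A : H →L[ℂ] H) (hA : IsStarNormal A) (L : Submodule ℂ H)
    [FiniteDimensional ℂ ↥L] :
    spectrum ℂ (SL A L) = Spec2 A L := by
  ext z
  rw [mem_spectrum_iff_eigen]
  constructor
  · rintro ⟨v, hvne, hv⟩
    rw [SL_apply, Prod.ext_iff] at hv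
    obtain ⟨h1, h2⟩ := hv
    simp only [Prod.smul_fst, Prod.smul_snd] at h1 h2
    have hy : v.2 ≠ 0 := by
      intro h0
      apply hvne
      have hx : v.1 = 0 := by rw [h2, h0, smul_zero]
      exact Prod.ext hx h0
    refine ⟨↑v.2, v.2.2, by simpa using hy, ?_⟩
    rw [h2] at h1
    exact (key_lemma A L z v.2).mp h1
  · rintro ⟨φ, hφL, hφne, hcond⟩
    set y : ↥L := ⟨φ, hφL⟩ with hy
    refine ⟨(z • y, y), ?_, ?_⟩
    · intro h0
      apply hφne
      have := congrArg Prod.snd h0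
      simpa [hy, Submodule.mk_eq_zero] using this
    · rw [SL_apply, Prod.ext_iff]
      constructor
      · exact (key_lemma A L z y).mpr hcond
      · rfl

end
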